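/- Let n ≥ 1 and for each i ∈ {1,…,n} let A_i, B_i, α_i > 0 be constants. Let I₁,…,I_n : [0,∞) → ℝ be continuous functions such that I := I₁ + ⋯ + I_n is absolutely continuous, and suppose that for each i ∈ {1,…,n} and for almost every t ≥ 0 with I_i(t) ≥ 0 one has I'(t) ≤ -A_i · I_i(t)^{α_i} + B_i. Then for every η > 0 there exists a time t₀ > 0 such that I(t) ≤ Σ_{i=1}^n (B_i/A_i)^{1/α_i} + η for every t ≥ t₀. -/

import Mathlib

open MeasureTheory

/-- Gronwall-type Lemma 4.5 (first assertion): if `I = I₁ + ⋯ + I_n` is absolutely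
continuous (encoded by `I(t) = I(0) + ∫₀ᵗ g`, where `g` is its a.e. derivative) and for each
`i` one has `I'(t) ≤ -A_i I_i(t)^{α_i} + B_i` for a.e. `t ≥ 0` with `I_i(t) ≥ 0`, then for
every `η > 0` there is `t₀ > 0` with `I(t) ≤ Σ (B_i/A_i)^{1/α_i} + η` for all `t ≥ t₀`. -/
theorem stmt1 (n : ℕ) (hn : 1 ≤ n) (A B α : Fin n → ℝ)
    (hA : ∀ i, 0 < A i) (hB : ∀ i, 0 < B i) (hα : ∀ i, 0 < α i)
    (I : Fin n → ℝ → ℝ) (hIcont : ∀ i, ContinuousOn (I i) (Set.Ici 0))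
    (g : ℝ → ℝ) (hg : LocallyIntegrableOn g (Set.Ici 0))
    (hFTC : ∀ t ∈ Set.Ici (0:ℝ), (∑ i, I i t) = (∑ i, I i 0) + ∫ s in (0:ℝ)..t, g s)
    (hineq : ∀ i, ∀ᵐ t ∂(volume.restrict (Set.Ici (0:ℝ))),
      0 ≤ I i t → g t ≤ -(A i) * (I i t) ^ (α i) + B i) :
    ∀ η > (0:ℝ), ∃ t₀ > (0:ℝ), ∀ t ≥ t₀,
      (∑ i, I i t) ≤ (∑ i, (B i / A i) ^ (1 / α i)) + η := by
  intro η hη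
  have hne : Nonempty (Fin n) := ⟨⟨0, hn⟩⟩
  set F : ℝ → ℝ := fun t => ∑ i, I i t with hF
  set K : Fin n → ℝ := fun i => (B i / A i) ^ (1 / α i) with hKdef
  have hK0 : ∀ i, 0 ≤ K i := fun i =>
    Real.rpow_nonneg (le_of_lt (div_pos (hB i) (hA i))) _
  set Ksum : ℝ := ∑ i, K i with hKsum
  set η' : ℝ := η / 2 with hη'
  have hη'pos : 0 < η' := by positivity
  set ε : ℝ := η' / n with hε
  have hnpos : (0:ℝ) < n := by exact_mod_cast hn
  have hεpos : 0 < ε := by positivity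
  -- the uniform decay constant
  set c : ℝ := Finset.univ.inf' Finset.univ_nonempty
    (fun i => A i * (K i + ε) ^ (α i) - B i) with hc
  have hKpow : ∀ i, (K i) ^ (α i) = B i / A i := by
    intro i
    have hba : (0:ℝ) ≤ B i / A i := le_of_lt (div_pos (hB i) (hA i))
    have : (K i) ^ (α i) = (B i / A i) ^ ((1 / α i) * α i) :=
      (Real.rpow_mul hba _ _).symm ▸ rfl
    rw [this, one_div_mul_cancel (ne_of_gt (hα i)), Real.rpow_one]
  have hcpos : 0 < c := by
    rw [hc, Finset.lt_inf'_iff]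
    intro i _
    have h1 : (K i) ^ (α i) < (K i + ε) ^ (α i) :=
      Real.rpow_lt_rpow (hK0 i) (by linarith) (hα i)
    have h2 : A i * (K i) ^ (α i) < A i * (K i + ε) ^ (α i) :=
      mul_lt_mul_of_pos_left h1 (hA i)
    have h3 : A i * (K i) ^ (α i) = B i := by
      rw [hKpow i]; exact mul_div_cancel₀ (B i) (ne_of_gt (hA i))
    linarith
  -- key a.e. estimate
  have hkey : ∀ᵐ t ∂(volume.restrict (Set.Ici (0:ℝ))),
      Ksum + η' < F t → g t ≤ -c := by
    filter_upwards [ae_all_iff.mpr hineq] with t ht hFt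
    have hex : ∃ i, K i + ε < I i t := by
      by_contra hcon
      push_neg at hcon
      have : F t ≤ ∑ i, (K i + ε) := Finset.sum_le_sum fun i _ => hcon i
      have hsum : ∑ i, (K i + ε) = Ksum + η' := by
        rw [Finset.sum_add_distrib, Finset.sum_const, Finset.card_univ,
          Fintype.card_fin, nsmul_eq_mul, hε]
        field_simp
        rfl
      linarith
    obtain ⟨i, hi⟩ := hex
    have hIi0 : 0 ≤ I i t := le_trans (by linarith [hK0 i, hεpos]) (le_of_lt hi)
    have hgt := ht i hIi0
    have hpow : (K i + ε) ^ (α i) ≤ (I i t) ^ (α i) :=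
      Real.rpow_le_rpow (by linarith [hK0 i]) (le_of_lt hi) (le_of_lt (hα i))
    have hci : c ≤ A i * (K i + ε) ^ (α i) - B i :=
      Finset.inf'_le _ (Finset.mem_univ i)
    nlinarith [mul_le_mul_of_nonneg_left hpow (le_of_lt (hA i))]
  -- interval integrability
  have hint : ∀ s t : ℝ, 0 ≤ s → s ≤ t → IntervalIntegrable g volume s t := by
    intro s t hs hst
    have : IntegrableOn g (Set.Icc s t) volume :=
      hg.integrableOn_compact_subset (Set.Icc_subset_Ici_iff hst |>.mpr hs) isCompact_Icc
    exact (this.mono_set (Set.uIcc_subset_Icc ⟨le_refl s, hst⟩ ⟨hst, le_refl t⟩)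
      ).intervalIntegrable
  -- FTC between two times
  have hFTC2 : ∀ s t : ℝ, 0 ≤ s → s ≤ t → F t = F s + ∫ u in s..t, g u := by
    intro s t hs hst
    have h1 := hFTC t (le_trans hs hst)
    have h2 := hFTC s hs
    have := intervalIntegral.integral_interval_sub_left
      (hint 0 t le_rfl (le_trans hs hst)) (hint 0 s le_rfl hs)
    simp only [hF] at h1 h2 ⊢
    linarith [this]
  -- integral bound on intervals where F stays large
  have hbound : ∀ s t : ℝ, 0 ≤ s → s ≤ t →
      (∀ u ∈ Set.Ioc s t, Ksum + η' < F u) →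
      (∫ u in s..t, g u) ≤ (t - s) * (-c) := by
    intro s t hs hst hbig
    have hae : g ≤ᵐ[volume.restrict (Set.Icc s t)] fun _ => -c := by
      have h1 : ∀ᵐ u ∂(volume.restrict (Set.Icc s t)),
          Ksum + η' < F u → g u ≤ -c :=
        ae_restrict_of_ae_restrict_of_subset ((Set.Icc_subset_Ici_self.trans (Set.Ici_subset_Ici.mpr hs))) hkey
      have h2 : ∀ᵐ u ∂(volume.restrict (Set.Icc s t)), u ≠ s := by
        refine ae_restrict_of_ae ?_
        rw [ae_iff]
        have : {u : ℝ | ¬ u ≠ s} = {s} := by ext u; simp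
        rw [this]
        exact Real.volume_singleton
      have h3 : ∀ᵐ u ∂(volume.restrict (Set.Icc s t)), u ∈ Set.Icc s t :=
        ae_restrict_mem measurableSet_Icc
      filter_upwards [h1, h2, h3] with u hu1 hu2 hu3
      exact hu1 (hbig u ⟨lt_of_le_of_ne hu3.1 (Ne.symm hu2), hu3.2⟩)
    have := intervalIntegral.integral_mono_ae_restrict hst (hint s t hs hst)
      (intervalIntegrable_const) hae
    simpa using this
  -- Step 1: find a time where F drops below Ksum + η'
  have hstep1 : ∃ t₁ : ℝ, 0 ≤ t₁ ∧ F t₁ ≤ Ksum + η' := by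
    by_contra hcon
    push_neg at hcon
    set T : ℝ := max 1 ((F 0 - (Ksum + η')) / c + 1) with hT
    have hT1 : (1:ℝ) ≤ T := le_max_left _ _
    have hT0 : (0:ℝ) ≤ T := by linarith
    have hbig : ∀ u ∈ Set.Ioc (0:ℝ) T, Ksum + η' < F u := fun u hu =>
      hcon u (le_of_lt hu.1)
    have h1 := hFTC2 0 T le_rfl hT0
    have h2 := hbound 0 T le_rfl hT0 hbig
    have hT2 : (F 0 - (Ksum + η')) / c + 1 ≤ T := le_max_right _ _
    have : F 0 - (Ksum + η') + c ≤ c * T := by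
      have := mul_le_mul_of_nonneg_left hT2 (le_of_lt hcpos)
      calc F 0 - (Ksum + η') + c = c * ((F 0 - (Ksum + η')) / c + 1) := by
            field_simp
        _ ≤ c * T := this
    have hFT := hcon T hT0
    nlinarith
  obtain ⟨t₁, ht₁0, ht₁⟩ := hstep1
  -- Step 2: F stays below Ksum + η for all t ≥ t₁
  have hstep2 : ∀ t ≥ t₁, F t ≤ Ksum + η := by
    intro t ht
    by_contra hcon
    push_neg at hcon
    have ht0 : (0:ℝ) ≤ t := le_trans ht₁0 ht
    have hFcont : ContinuousOn F (Set.Ici 0) := continuousOn_finset_sum _ fun i _ => hIcont i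
    set S : Set ℝ := Set.Icc t₁ t ∩ F ⁻¹' (Set.Iic (Ksum + η')) with hS
    have hSne : S.Nonempty := ⟨t₁, ⟨le_refl t₁, ht⟩, ht₁⟩
    have hSbdd : BddAbove S := BddAbove.mono (fun u hu => hu.1) bddAbove_Icc
    have hSclosed : IsClosed S :=
      ContinuousOn.preimage_isClosed_of_isClosed
        (hFcont.mono ((Set.Icc_subset_Ici_self.trans (Set.Ici_subset_Ici.mpr ht₁0)))) isClosed_Icc isClosed_Iic
    set s₀ : ℝ := sSup S with hs₀def
    have hs₀mem : s₀ ∈ S := hSclosed.csSup_mem hSne hSbdd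
    have hs₀0 : 0 ≤ s₀ := le_trans ht₁0 hs₀mem.1.1
    have hs₀t : s₀ ≤ t := hs₀mem.1.2
    have hs₀F : F s₀ ≤ Ksum + η' := hs₀mem.2
    have hbig : ∀ u ∈ Set.Ioc s₀ t, Ksum + η' < F u := by
      intro u hu
      by_contra hcon2
      push_neg at hcon2
      have : u ∈ S := ⟨⟨le_trans hs₀mem.1.1 (le_of_lt hu.1), hu.2⟩, hcon2⟩
      have := le_csSup hSbdd this
      exact absurd hu.1 (not_lt.mpr this)
    have h1 := hFTC2 s₀ t hs₀0 hs₀t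
    have h2 := hbound s₀ t hs₀0 hs₀t hbig
    have : (t - s₀) * (-c) ≤ 0 := by nlinarith
    have : F t ≤ Ksum + η' := by linarith
    have : Ksum + η' < Ksum + η := by linarith
    linarith
  refine ⟨t₁ + 1, by linarith, fun t ht => ?_⟩
  exact hstep2 t (by linarith)
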